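/- There exists a universal constant R₀ > 0 with the following property: for every R ≥ R₀ and every continuous function L : [0,R] → ℝ such that (i) L(r) ≥ 2πr for all r ∈ [0,R], and (ii) ∫₀^R ((ln(R+1) − ln(r+1))/(r+1)²)·L(r) dr ≤ π·ln²(R+1), there exists r₀ ∈ [√R, R] with L(r₀) ≤ 2π·r₀·(1 + 10/ln(R+1)). -/

import Mathlib

open Real MeasureTheory intervalIntegral Set
set_option maxHeartbeats 1000000

lemma aux_deriv (c r : ℝ) (hr : 0 < r + 1) :
    HasDerivAt (fun t => c * Real.log (t+1) - (Real.log (t+1))^2/2 - (Real.log (t+1) - c + 1)/(t+1))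
      ((c - Real.log (r+1)) / (r+1)^2 * r) r := by
  have h0 : HasDerivAt (fun t : ℝ => t + 1) 1 r := (hasDerivAt_id r).add_const 1
  have hlog : HasDerivAt (fun t => Real.log (t+1)) (1/(r+1)) r := by
    simpa [Function.comp_def] using (Real.hasDerivAt_log hr.ne').comp r h0
  have h1 : HasDerivAt (fun t => c * Real.log (t+1)) (c * (1/(r+1))) r := hlog.const_mul c
  have h2 : HasDerivAt (fun t => (Real.log (t+1))^2/2)
      ((↑2 * Real.log (r+1) ^ 1 * (1/(r+1)))/2) r := (hlog.pow 2).div_const 2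
  have h3 : HasDerivAt (fun t => (Real.log (t+1) - c + 1)/(t+1))
      (((1/(r+1)) * (r+1) - (Real.log (r+1) - c + 1) * 1)/(r+1)^2) r :=
    ((hlog.sub_const c).add_const 1).div h0 hr.ne'
  refine ((h1.sub h2).sub h3).congr_deriv ?_
  field_simp
  ring

lemma aux_contw (c : ℝ) : ContinuousOn (fun r : ℝ => (c - Real.log (r+1)) / (r+1)^2) (Set.Ici 0) := by
  apply ContinuousOn.div
  · exact continuousOn_const.sub ((continuousOn_id.add continuousOn_const).log
      (fun r hr => by simp only [Set.mem_Ici] at hr; simp only [Pi.add_apply, id]; intro h; nlinarith))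
  · fun_prop
  · intro r hr
    simp only [Set.mem_Ici] at hr
    positivity

lemma aux_ftc (c a b : ℝ) (ha : 0 ≤ a) (hab : a ≤ b) :
    ∫ r in a..b, (c - Real.log (r+1)) / (r+1)^2 * r =
      (c * Real.log (b+1) - (Real.log (b+1))^2/2 - (Real.log (b+1) - c + 1)/(b+1)) -
      (c * Real.log (a+1) - (Real.log (a+1))^2/2 - (Real.log (a+1) - c + 1)/(a+1)) := by
  apply intervalIntegral.integral_eq_sub_of_hasDerivAt
  · intro r hr
    rw [Set.uIcc_of_le hab] at hr
    exact aux_deriv c r (by linarith [hr.1])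
  · apply ContinuousOn.intervalIntegrable
    apply ContinuousOn.mul _ continuousOn_id
    apply (aux_contw c).mono
    rw [Set.uIcc_of_le hab]
    exact fun r hr => le_trans ha hr.1

theorem stmt_11 :
    ∃ R₀ : ℝ, 0 < R₀ ∧
      ∀ R : ℝ, R₀ ≤ R →
        ∀ L : ℝ → ℝ, ContinuousOn L (Set.Icc 0 R) →
          (∀ r ∈ Set.Icc (0:ℝ) R, 2 * Real.pi * r ≤ L r) →
          (∫ r in (0:ℝ)..R,
              ((Real.log (R + 1) - Real.log (r + 1)) / (r + 1) ^ 2) * L r)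
            ≤ Real.pi * (Real.log (R + 1)) ^ 2 →
          ∃ r₀ ∈ Set.Icc (Real.sqrt R) R,
            L r₀ ≤ 2 * Real.pi * r₀ * (1 + 10 / Real.log (R + 1)) := by
  refine ⟨Real.exp 50, Real.exp_pos 50, ?_⟩
  intro R hR L hL hlow hInt
  by_contra hcon
  push_neg at hcon
  have h25 : (26:ℝ) ≤ Real.exp 25 := by
    have := Real.add_one_le_exp (25:ℝ); linarith
  have hexp : (676:ℝ) ≤ Real.exp 50 := by
    have : Real.exp 50 = Real.exp 25 * Real.exp 25 := by
      rw [← Real.exp_add]; norm_num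
    nlinarith
  have hR1 : (676:ℝ) ≤ R := le_trans hexp hR
  set x := Real.log (R+1) with hxdef
  set sR := Real.sqrt R with hsdef
  set y := Real.log (sR+1) with hydef
  have hsR0 : 0 ≤ sR := Real.sqrt_nonneg R
  have hsq : sR^2 = R := Real.sq_sqrt (by linarith)
  have hs19 : 19 ≤ sR := by nlinarith
  have hsRR : sR ≤ R := by nlinarith
  have hx50 : 50 ≤ x := by
    rw [hxdef]
    calc (50:ℝ) = Real.log (Real.exp 50) := (Real.log_exp 50).symm
    _ ≤ Real.log (R+1) := Real.log_le_log (Real.exp_pos 50) (by linarith)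
  have hx0 : (0:ℝ) < x := by linarith
  have hy0 : 0 ≤ y := Real.log_nonneg (by linarith)
  have hlog2 : Real.log 2 < 0.6931471808 := Real.log_two_lt_d9
  have hy : y ≤ Real.log 2 + x/2 := by
    have h1 : y ≤ Real.log (2*sR) := Real.log_le_log (by linarith) (by linarith)
    rw [Real.log_mul (by norm_num) (by linarith)] at h1
    have h2 : Real.log sR = Real.log R / 2 := by rw [hsdef, Real.log_sqrt (by linarith)]
    have h3 : Real.log R ≤ x := Real.log_le_log (by linarith) (by linarith)
    linarith
  have hsqfact : (x/2 - 0.7)*(x/2 - 0.7) ≤ (x-y)*(x-y) :=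
    mul_self_le_mul_self (by linarith) (by linarith)
  have hx2 : 50*x ≤ x^2 := by nlinarith
  have ht0 : (0:ℝ) < 1/(R+1) := by positivity
  have ht1 : 1/(R+1) ≤ 1 := by
    rw [div_le_one (by linarith)]; linarith
  have hxt : x * (1/(R+1)) ≤ x := by
    rw [mul_one_div, div_le_iff₀ (by linarith : (0:ℝ) < R+1)]
    nlinarith
  have hu : -(x/20) ≤ (y - x + 1)/(sR+1) := by
    rw [le_div_iff₀ (by linarith : (0:ℝ) < sR+1)]
    nlinarith [mul_nonneg hx0.le (by linarith : (0:ℝ) ≤ sR - 19)]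
  clear_value x sR y
  -- nonnegativity of weight
  have hwnn : ∀ r ∈ Set.Icc (0:ℝ) R, 0 ≤ (x - Real.log (r+1)) / (r+1)^2 := by
    intro r hr
    have h1 : Real.log (r+1) ≤ x := by
      rw [hxdef]
      exact Real.log_le_log (by linarith [hr.1]) (by linarith [hr.2])
    have h2 : (0:ℝ) < (r+1)^2 := by nlinarith [hr.1]
    exact div_nonneg (by linarith) h2.le
  -- integrability
  have hcontwl : ContinuousOn (fun r => (x - Real.log (r+1))/(r+1)^2 * L r) (Set.Icc 0 R) :=
    ((aux_contw x).mono (fun r hr => hr.1)).mul hL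
  have hi1 : IntervalIntegrable (fun r => (x - Real.log (r+1))/(r+1)^2 * L r) volume 0 sR := by
    apply ContinuousOn.intervalIntegrable
    rw [Set.uIcc_of_le hsR0]
    exact hcontwl.mono (Set.Icc_subset_Icc le_rfl hsRR)
  have hi2 : IntervalIntegrable (fun r => (x - Real.log (r+1))/(r+1)^2 * L r) volume sR R := by
    apply ContinuousOn.intervalIntegrable
    rw [Set.uIcc_of_le hsRR]
    exact hcontwl.mono (Set.Icc_subset_Icc hsR0 le_rfl)
  have hsplit := intervalIntegral.integral_add_adjacent_intervals hi1 hi2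
  have hcw : ∀ (cst : ℝ) (a b : ℝ), 0 ≤ a → a ≤ b → b ≤ R →
      IntervalIntegrable (fun r => (x - Real.log (r+1))/(r+1)^2 * (cst*r)) volume a b := by
    intro cst a b ha hab hbR
    apply ContinuousOn.intervalIntegrable
    rw [Set.uIcc_of_le hab]
    exact ((aux_contw x).mono (fun r hr => le_trans ha hr.1)).mul (by fun_prop)
  -- monotone comparisons
  have hm1 : ∫ r in (0:ℝ)..sR, (x - Real.log (r+1))/(r+1)^2 * (2*Real.pi*r)
      ≤ ∫ r in (0:ℝ)..sR, (x - Real.log (r+1))/(r+1)^2 * L r := by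
    apply intervalIntegral.integral_mono_on hsR0 (hcw _ 0 sR le_rfl hsR0 hsRR) hi1
    intro r hr
    have hr' : r ∈ Set.Icc (0:ℝ) R := ⟨hr.1, le_trans hr.2 hsRR⟩
    exact mul_le_mul_of_nonneg_left (hlow r hr') (hwnn r hr')
  have hm2 : ∫ r in sR..R, (x - Real.log (r+1))/(r+1)^2 * ((2*Real.pi*(1+10/x))*r)
      ≤ ∫ r in sR..R, (x - Real.log (r+1))/(r+1)^2 * L r := by
    apply intervalIntegral.integral_mono_on hsRR (hcw _ sR R hsR0 hsRR le_rfl) hi2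
    intro r hr
    have hr' : r ∈ Set.Icc (0:ℝ) R := ⟨le_trans hsR0 hr.1, hr.2⟩
    have hc := le_of_lt (hcon r hr)
    exact mul_le_mul_of_nonneg_left (by linarith [hc]) (hwnn r hr')
  -- evaluate the two lower integrals via the antiderivative
  have key1 : ∫ r in (0:ℝ)..sR, (x - Real.log (r+1))/(r+1)^2 * (2*Real.pi*r)
      = 2*Real.pi * ((x*y - y^2/2 - (y - x + 1)/(sR+1)) - (x - 1)) := by
    have e : (fun r : ℝ => (x - Real.log (r+1))/(r+1)^2 * (2*Real.pi*r))
        = fun r => (2*Real.pi) * ((x - Real.log (r+1))/(r+1)^2 * r) := by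
      funext r; ring
    rw [e, intervalIntegral.integral_const_mul, aux_ftc x 0 sR le_rfl hsR0, ← hydef]
    norm_num
    ring
  have key2 : ∫ r in sR..R, (x - Real.log (r+1))/(r+1)^2 * ((2*Real.pi*(1+10/x))*r)
      = (2*Real.pi*(1+10/x)) * ((x*x - x^2/2 - (x - x + 1)/(R+1)) - (x*y - y^2/2 - (y - x + 1)/(sR+1))) := by
    have e : (fun r : ℝ => (x - Real.log (r+1))/(r+1)^2 * ((2*Real.pi*(1+10/x))*r))
        = fun r => (2*Real.pi*(1+10/x)) * ((x - Real.log (r+1))/(r+1)^2 * r) := by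
      funext r; ring
    rw [e, intervalIntegral.integral_const_mul, aux_ftc x sR R hsR0 hsRR, ← hxdef, ← hydef]
  have hbig : (∫ r in (0:ℝ)..sR, (x - Real.log (r+1))/(r+1)^2 * (2*Real.pi*r))
      + (∫ r in sR..R, (x - Real.log (r+1))/(r+1)^2 * ((2*Real.pi*(1+10/x))*r))
      ≤ Real.pi * x^2 := by
    linarith [hm1, hm2, hsplit, hInt]
  rw [key1, key2] at hbig
  -- divide by π
  have hmaster : 2*((x*y - y^2/2 - (y - x + 1)/(sR+1)) - (x-1))
      + 2*(1+10/x)*((x^2/2 - 1/(R+1)) - (x*y - y^2/2 - (y - x + 1)/(sR+1))) ≤ x^2 := by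
    refine le_of_mul_le_mul_left ?_ Real.pi_pos
    calc Real.pi * (2*((x*y - y^2/2 - (y - x + 1)/(sR+1)) - (x-1))
          + 2*(1+10/x)*((x^2/2 - 1/(R+1)) - (x*y - y^2/2 - (y - x + 1)/(sR+1))))
        = 2*Real.pi * ((x*y - y^2/2 - (y - x + 1)/(sR+1)) - (x - 1))
          + (2*Real.pi*(1+10/x)) * ((x*x - x^2/2 - (x - x + 1)/(R+1)) - (x*y - y^2/2 - (y - x + 1)/(sR+1))) := by
          ring
      _ ≤ Real.pi * x^2 := hbig
  -- multiply by x to clear 10/x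
  have hxne : x ≠ 0 := ne_of_gt hx0
  have hsne : sR + 1 ≠ 0 := by linarith
  have hRne : R + 1 ≠ 0 := by linarith
  have hkey : x * (2*((x*y - y^2/2 - (y - x + 1)/(sR+1)) - (x-1))
      + 2*(1+10/x)*((x^2/2 - 1/(R+1)) - (x*y - y^2/2 - (y - x + 1)/(sR+1))))
      = x^3 + 8*x^2 + 2*x - 2*x*(1/(R+1)) - 20*(1/(R+1))
        - 20*(x*y - y^2/2 - (y - x + 1)/(sR+1)) := by
    field_simp
    ring
  have h6 : x^3 + 8*x^2 + 2*x - 2*x*(1/(R+1)) - 20*(1/(R+1))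
      - 20*(x*y - y^2/2 - (y - x + 1)/(sR+1)) ≤ x^3 := by
    calc x^3 + 8*x^2 + 2*x - 2*x*(1/(R+1)) - 20*(1/(R+1))
        - 20*(x*y - y^2/2 - (y - x + 1)/(sR+1))
        = x * (2*((x*y - y^2/2 - (y - x + 1)/(sR+1)) - (x-1))
          + 2*(1+10/x)*((x^2/2 - 1/(R+1)) - (x*y - y^2/2 - (y - x + 1)/(sR+1)))) := hkey.symm
      _ ≤ x * x^2 := mul_le_mul_of_nonneg_left hmaster hx0.le
      _ = x^3 := by ring
  linarith [h6, hsqfact, hxt, ht0, ht1, hu, hx2, hx50]
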